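/- Contribution bounding yields bounded sensitivity: if a transformation retains at most k records per privacy ID, then for a subsequent counting query the resulting ℓ₁-sensitivity with respect to add/remove of one privacy ID (with all its records) is at most k, even if the original number of records per ID is unbounded. -/
import Mathlib


/-- Contribution bounding yields bounded sensitivity: if the transformation
`bound` keeps at most k records per privacy ID, is a sub-multiset of its
input, and retains records of unaffected IDs identically (stability), then
for the counting query the ℓ₁-sensitivity w.r.t. adding/removing all records
of one privacy ID is at most k, even if the number of records per ID in the
original dataset is unbounded. -/
theorem contribution_bounding_sensitivity
    {R I : Type*} [DecidableEq I]
    (pid : R → I) (k : ℕ)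
    (bound : Multiset R → Multiset R)
    -- the transformation keeps a subset of the records
    (hsub : ∀ D : Multiset R, bound D ≤ D)
    -- at most k records per privacy ID are retained
    (hcount : ∀ (D : Multiset R) (i : I),
      Multiset.card ((bound D).filter (fun r => pid r = i)) ≤ k)
    -- records of other IDs are retained identically
    (hstable : ∀ (D D' : Multiset R) (i₀ : I),
      D.filter (fun r => ¬ pid r = i₀) = D'.filter (fun r => ¬ pid r = i₀) →
      (bound D).filter (fun r => ¬ pid r = i₀) =
        (bound D').filter (fun r => ¬ pid r = i₀)) :
    -- neighbors: D' is D with all records of privacy ID i₀ removed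
    ∀ (D : Multiset R) (i₀ : I),
      |(Multiset.card (bound D) : ℤ) -
        Multiset.card (bound (D.filter (fun r => ¬ pid r = i₀)))| ≤ k := by
  intro D i₀
  set D' := D.filter (fun r => ¬ pid r = i₀) with hD'
  have hfilt : D.filter (fun r => ¬ pid r = i₀) = D'.filter (fun r => ¬ pid r = i₀) := by
    rw [hD', Multiset.filter_filter]
    simp
  have hst := hstable D D' i₀ hfilt
  have split : ∀ M : Multiset R,
      Multiset.card M = Multiset.card (M.filter (fun r => pid r = i₀)) +
        Multiset.card (M.filter (fun r => ¬ pid r = i₀)) := by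
    intro M
    rw [← Multiset.card_add, Multiset.filter_add_not]
  have h1 := split (bound D)
  have h2 := split (bound D')
  rw [h1, h2, hst]
  have a1 := hcount D i₀
  have a2 := hcount D' i₀
  push_cast
  rw [abs_sub_le_iff]
  constructor <;> [skip; skip] <;> push_cast <;> omega
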